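/- In the canonical model structure on Cat, if a diagram of categories C → D ← E has either leg full and surjective on objects, then the comparison functor from the standard homotopy pullback of the diagram to the 2-fiber product C ×^{(2)}_D E admits, over each object of the 2-fiber product, a slice category with an initial object; consequently by Quillen's Theorem A the comparison functor is a homotopy equivalence on nerves when C, D, E are groupoids. -/

import Mathlib

/-!
STATEMENT 11: For a diagram of groupoids `C --F--> D <--K-- E` in which one of the two
legs is full and surjective on objects, the comparison functor from the standard
homotopy pullback of the diagram (objects `(c,d,e,φ,ψ)` with `F(c) = K(e)`, morphisms the
pairs `(c → c', e → e')` with matching images) to the 2-fiber product `C ×⁽²⁾_D E`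
(objects `(c,d,e, φ : F(c) ≅ d, ψ : K(e) ≅ d)` with no equality condition) admits, over
each object of the 2-fiber product, a slice category with an initial object — whence, by
Quillen's Theorem A, it is a homotopy equivalence on nerves.
-/

open CategoryTheory

universe u v₁ v₂ v₃ u₁ u₂ u₃

variable {C : Type u₁} {D : Type u₂} {E : Type u₃}
  [Groupoid C] [Groupoid D] [Groupoid E]

/-- An object of the 2-fiber product `C ×⁽²⁾_D E` of `F : C ⥤ D` and `K : E ⥤ D`. -/
structure TwoFiber (F : C ⥤ D) (K : E ⥤ D) where
  a : C
  b : D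
  c : E
  φ : F.obj a ≅ b
  ψ : K.obj c ≅ b

/-- A morphism of the 2-fiber product. -/
@[ext]
structure TwoFiberHom {F : C ⥤ D} {K : E ⥤ D} (x y : TwoFiber F K) where
  fa : x.a ⟶ y.a
  fb : x.b ⟶ y.b
  fc : x.c ⟶ y.c
  wφ : x.φ.hom ≫ fb = F.map fa ≫ y.φ.hom
  wψ : x.ψ.hom ≫ fb = K.map fc ≫ y.ψ.hom

instance (F : C ⥤ D) (K : E ⥤ D) : Category (TwoFiber F K) where
  Hom := TwoFiberHom
  id x := ⟨𝟙 _, 𝟙 _, 𝟙 _, by simp, by simp⟩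
  comp f g :=
    ⟨f.fa ≫ g.fa, f.fb ≫ g.fb, f.fc ≫ g.fc, by
      rw [← Category.assoc, f.wφ, Category.assoc, g.wφ, Functor.map_comp, Category.assoc], by
      rw [← Category.assoc, f.wψ, Category.assoc, g.wψ, Functor.map_comp, Category.assoc]⟩
  id_comp f := TwoFiberHom.ext (Category.id_comp _) (Category.id_comp _) (Category.id_comp _)
  comp_id f := TwoFiberHom.ext (Category.comp_id _) (Category.comp_id _) (Category.comp_id _)
  assoc f g h := TwoFiberHom.ext (Category.assoc _ _ _) (Category.assoc _ _ _) (Category.assoc _ _ _)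

/-- An object of the standard homotopy pullback of `F : C ⥤ D` and `K : E ⥤ D`:
a tuple `(c, d, e, φ, ψ)` with `F(c) = K(e)`. -/
structure HPB (F : C ⥤ D) (K : E ⥤ D) where
  a : C
  b : D
  c : E
  he : F.obj a = K.obj c
  φ : F.obj a ≅ b
  ψ : K.obj c ≅ b

/-- A morphism of the homotopy pullback: a pair with matching images in `D`. -/
@[ext]
structure HPBHom {F : C ⥤ D} {K : E ⥤ D} (x y : HPB F K) where
  fa : x.a ⟶ y.a
  fc : x.c ⟶ y.c
  w : F.map fa ≫ eqToHom y.he = eqToHom x.he ≫ K.map fc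

instance (F : C ⥤ D) (K : E ⥤ D) : Category (HPB F K) where
  Hom := HPBHom
  id x := ⟨𝟙 _, 𝟙 _, by simp⟩
  comp f g :=
    ⟨f.fa ≫ g.fa, f.fc ≫ g.fc, by
      rw [Functor.map_comp, Functor.map_comp, Category.assoc, g.w, ← Category.assoc,
        f.w, Category.assoc]⟩
  id_comp f := HPBHom.ext (Category.id_comp _) (Category.id_comp _)
  comp_id f := HPBHom.ext (Category.comp_id _) (Category.comp_id _)
  assoc f g h := HPBHom.ext (Category.assoc _ _ _) (Category.assoc _ _ _)

/-- The comparison functor from the homotopy pullback to the 2-fiber product, sending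
`(c,d,e,φ,ψ)` (with `F(c) = K(e)`) to `(c,d,e,φ,φ)`. -/
def compare (F : C ⥤ D) (K : E ⥤ D) : HPB F K ⥤ TwoFiber F K where
  obj x := ⟨x.a, x.b, x.c, x.φ, eqToIso x.he.symm ≪≫ x.φ⟩
  map {x y} f :=
    { fa := f.fa
      fb := x.φ.inv ≫ F.map f.fa ≫ y.φ.hom
      fc := f.fc
      wφ := by simp
      wψ := by
        have w := f.w
        simp only [Iso.trans_hom, eqToIso.hom, Category.assoc, Iso.hom_inv_id_assoc]
        rw [← Category.assoc, ← Category.assoc (K.map f.fc)]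
        congr 1
        rw [eqToHom_comp_iff]
        rw [comp_eqToHom_iff] at w
        rw [w]
        simp }
  map_id x := TwoFiberHom.ext rfl
    (by show x.φ.inv ≫ F.map (𝟙 x.a) ≫ x.φ.hom = 𝟙 x.b; simp) rfl
  map_comp {x y z} f g := TwoFiberHom.ext rfl
    (by
      show x.φ.inv ≫ F.map (f.fa ≫ g.fa) ≫ z.φ.hom =
        (x.φ.inv ≫ F.map f.fa ≫ y.φ.hom) ≫ (y.φ.inv ≫ F.map g.fa ≫ z.φ.hom)
      simp) rfl

lemma initial_of_fb_id {F : C ⥤ D} {K : E ⥤ D} {y : TwoFiber F K}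
    (x₀ : HPB F K) (f₀ : (compare F K).obj x₀ ⟶ y) :
    ∃ x : CostructuredArrow (compare F K) y, Nonempty (Limits.IsInitial x) := by
  -- generic component equations for an arbitrary slice object
  have h3 : ∀ (x : HPB F K) (f : (compare F K).obj x ⟶ y),
      F.map f.fa = x.φ.hom ≫ f.fb ≫ y.φ.inv := by
    intro x f
    have w : x.φ.hom ≫ f.fb = F.map f.fa ≫ y.φ.hom := f.wφ
    exact ((Iso.eq_comp_inv y.φ).mpr w.symm).trans (Category.assoc _ _ _)
  have h4 : ∀ (x : HPB F K) (f : (compare F K).obj x ⟶ y),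
      K.map f.fc = eqToHom x.he.symm ≫ x.φ.hom ≫ f.fb ≫ y.ψ.inv := by
    intro x f
    have w : (eqToHom x.he.symm ≫ x.φ.hom) ≫ f.fb = K.map f.fc ≫ y.ψ.hom := f.wψ
    exact ((Iso.eq_comp_inv y.ψ).mpr w.symm).trans
      ((Category.assoc _ _ _).trans (Category.assoc _ _ _))
  -- the canonical map to any slice object
  have mkHom : ∀ Z : CostructuredArrow (_root_.compare F K) y,
      (CostructuredArrow.mk f₀ ⟶ Z) := by
    intro Z
    refine CostructuredArrow.homMk
      (⟨f₀.fa ≫ Groupoid.inv Z.hom.fa, f₀.fc ≫ Groupoid.inv Z.hom.fc, ?_⟩ :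
        HPBHom x₀ Z.left) ?_
    · dsimp only [_root_.compare] at *
      simp only [Functor.map_comp, Groupoid.inv_eq_inv, Functor.map_inv,
        h3 x₀ f₀, h4 x₀ f₀, h3 Z.left Z.hom, h4 Z.left Z.hom]
      simp
    · apply TwoFiberHom.ext
      · show (f₀.fa ≫ Groupoid.inv Z.hom.fa) ≫ Z.hom.fa = f₀.fa
        simp [Groupoid.inv_eq_inv]
      · show (x₀.φ.inv ≫ F.map (f₀.fa ≫ Groupoid.inv Z.hom.fa) ≫ Z.left.φ.hom) ≫ Z.hom.fb
          = f₀.fb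
        dsimp only [_root_.compare] at *
        simp only [Functor.map_comp, Groupoid.inv_eq_inv, Functor.map_inv,
          h3 x₀ f₀, h3 Z.left Z.hom]
        simp
      · show (f₀.fc ≫ Groupoid.inv Z.hom.fc) ≫ Z.hom.fc = f₀.fc
        simp [Groupoid.inv_eq_inv]
  -- uniqueness of maps out of (x₀, f₀)
  have uniq : ∀ (Z : CostructuredArrow (_root_.compare F K) y)
      (m m' : CostructuredArrow.mk f₀ ⟶ Z), m = m' := by
    intro Z m m'
    have forced : ∀ (m : CostructuredArrow.mk f₀ ⟶ Z),
        m.left.fa = f₀.fa ≫ Groupoid.inv Z.hom.fa ∧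
        m.left.fc = f₀.fc ≫ Groupoid.inv Z.hom.fc := by
      intro m
      have hw := CostructuredArrow.w m
      have hfa := congrArg TwoFiberHom.fa hw
      have hfc := congrArg TwoFiberHom.fc hw
      simp only [CostructuredArrow.mk_hom_eq_self] at hfa hfc
      constructor
      · have : m.left.fa ≫ Z.hom.fa = f₀.fa := hfa
        rw [← this]; erw [Category.assoc, Groupoid.comp_inv, Category.comp_id]
      · have : m.left.fc ≫ Z.hom.fc = f₀.fc := hfc
        rw [← this]; erw [Category.assoc, Groupoid.comp_inv, Category.comp_id]
    obtain ⟨ha, hc⟩ := forced m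
    obtain ⟨ha', hc'⟩ := forced m'
    apply CostructuredArrow.hom_ext
    exact HPBHom.ext (ha.trans ha'.symm) (hc.trans hc'.symm)
  exact ⟨CostructuredArrow.mk f₀,
    ⟨Limits.IsInitial.ofUniqueHom mkHom (fun Z m => uniq Z m (mkHom Z))⟩⟩

/-- If one of the legs of the cospan of groupoids is full and surjective on objects,
then every slice of the comparison functor over an object of the 2-fiber product has an
initial object (so, by Quillen's Theorem A, the comparison functor is a homotopy
equivalence on nerves). -/
theorem compare_slices_have_initial (F : C ⥤ D) (K : E ⥤ D)
    (h : (Function.Surjective F.obj ∧ F.Full) ∨ (Function.Surjective K.obj ∧ K.Full)) :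
    ∀ y : TwoFiber F K,
      ∃ x : CostructuredArrow (compare F K) y, Nonempty (Limits.IsInitial x) := by
  intro y
  rcases h with ⟨hsurj, hfull⟩ | ⟨hsurj, hfull⟩
  · -- F is surjective on objects and full
    obtain ⟨a₀, ha₀⟩ := hsurj (K.obj y.c)
    set x₀ : HPB F K := ⟨a₀, y.b, y.c, ha₀, eqToIso ha₀ ≪≫ y.ψ, y.ψ⟩ with hx₀
    obtain ⟨fa, hfa⟩ := hfull.map_surjective
      ((eqToHom ha₀ ≫ y.ψ.hom) ≫ y.φ.inv : F.obj a₀ ⟶ F.obj y.a)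
    refine initial_of_fb_id x₀ ⟨fa, 𝟙 y.b, 𝟙 y.c, ?_, ?_⟩
    · show (eqToHom ha₀ ≫ y.ψ.hom) ≫ 𝟙 y.b = F.map fa ≫ y.φ.hom
      rw [hfa]; simp
    · show (eqToHom ha₀.symm ≫ eqToHom ha₀ ≫ y.ψ.hom) ≫ 𝟙 y.b = K.map (𝟙 y.c) ≫ y.ψ.hom
      simp
  · -- K is surjective on objects and full
    obtain ⟨c₀, hc₀⟩ := hsurj (F.obj y.a)
    set x₀ : HPB F K := ⟨y.a, y.b, c₀, hc₀.symm, y.φ, eqToIso hc₀ ≪≫ y.φ⟩ with hx₀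
    obtain ⟨fc, hfc⟩ := hfull.map_surjective
      ((eqToHom hc₀ ≫ y.φ.hom) ≫ y.ψ.inv : K.obj c₀ ⟶ K.obj y.c)
    refine initial_of_fb_id x₀ ⟨𝟙 y.a, 𝟙 y.b, fc, ?_, ?_⟩
    · show y.φ.hom ≫ 𝟙 y.b = F.map (𝟙 y.a) ≫ y.φ.hom
      simp
    · show (eqToHom hc₀.symm.symm ≫ y.φ.hom) ≫ 𝟙 y.b = K.map fc ≫ y.ψ.hom
      rw [hfc]; simp
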